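/- Let p ∈ ℂ, k a positive integer with k + p ≠ 0, and f ∈ ℂ[λ] satisfying (pμ - (k+p)λ)·f(λ+μ) = pμ·f(μ) for all λ, μ. Then f = 0. -/

import Mathlib

/-- Let `p ∈ ℂ`, `k ≥ 1` an integer with `k + p ≠ 0`, and `f ∈ ℂ[λ]` with
`(pμ - (k+p)λ)·f(λ+μ) = pμ·f(μ)` for all `λ, μ`.  Then `f = 0`. -/
theorem f_eq_zero (p : ℂ) (k : ℕ) (hk : 1 ≤ k) (hkp : (k : ℂ) + p ≠ 0)
    (f : Polynomial ℂ)
    (h : ∀ lam mu : ℂ, (p * mu - ((k : ℂ) + p) * lam) * f.eval (lam + mu)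
        = p * mu * f.eval mu) :
    f = 0 := by
  apply Polynomial.eq_zero_of_infinite_isRoot
  apply Set.Infinite.mono (s := {x : ℂ | x ≠ 0})
  · intro x hx
    have := h x 0
    simp only [mul_zero, zero_sub, add_zero, zero_mul] at this
    have : f.eval x = 0 := by
      rcases mul_eq_zero.mp this with h1 | h1
      · exact absurd (by
          rcases mul_eq_zero.mp (neg_eq_zero.mp h1) with h2 | h2
          · exact absurd h2 hkp
          · exact absurd h2 hx) (fun h => h)
      · exact h1
    exact this
  · exact Set.infinite_of_injective_forall_mem (f := fun n : ℕ => (n : ℂ) + 1)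
      (fun a b hab => by field_simp at hab; exact Nat.add_right_cancel (m := 1) (by exact_mod_cast hab))
      (fun n => by simpa using Nat.cast_add_one_ne_zero (R := ℂ) n)
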